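/- arXiv:2006.00941 — 3 statements merged into one kernel-verified Lean document; each statement's English description precedes it below -/
import Mathlib

section
/- Let P ∈ ℤ[x] be irreducible over ℚ, let α ∈ ℂ satisfy P(α) = 0, let p be a prime not dividing the leading coefficient of P, and let a ∈ ℤ satisfy P(a) ≡ 0 (mod p). Then for every non-constant Q ∈ ℤ[x] with Q(α) = 0, we have Q(a) ≡ 0 (mod p). -/
open Polynomial

theorem root_mod_p_of_common_root (P : Polynomial ℤ)
    (hirr : Irreducible (P.map (Int.castRingHom ℚ)))
    (α : ℂ) (hα : Polynomial.aeval α P = 0)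
    (p : ℕ) (hp : p.Prime) (hlead : ¬ (p : ℤ) ∣ P.leadingCoeff)
    (a : ℤ) (ha : (p : ℤ) ∣ P.eval a)
    (Q : Polynomial ℤ) (hQ : 0 < Q.natDegree) (hQα : Polynomial.aeval α Q = 0) :
    (p : ℤ) ∣ Q.eval a := by
  have hmapcast : algebraMap ℤ ℚ = Int.castRingHom ℚ := algebraMap_int_eq ℚ
  have hP0 : P ≠ 0 := by
    intro h; exact hlead (h ▸ by simp)
  have hQ0 : Q ≠ 0 := by
    intro h; rw [h] at hQ; simp at hQ
  have hPQ0 : P.map (Int.castRingHom ℚ) ≠ 0 := hirr.ne_zero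
  have hQQ0 : Q.map (Int.castRingHom ℚ) ≠ 0 := by
    exact (Polynomial.map_ne_zero_iff (f := Int.castRingHom ℚ) Int.cast_injective).mpr hQ0
  have hαP : Polynomial.aeval α (P.map (Int.castRingHom ℚ)) = 0 := by
    rw [← hmapcast, aeval_map_algebraMap]; exact hα
  have hαQ : Polynomial.aeval α (Q.map (Int.castRingHom ℚ)) = 0 := by
    rw [← hmapcast, aeval_map_algebraMap]; exact hQα
  have hint : IsIntegral ℚ α :=
    (isAlgebraic_iff_isIntegral).mp ⟨P.map (Int.castRingHom ℚ), hPQ0, hαP⟩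
  have hm1 : minpoly ℚ α ∣ P.map (Int.castRingHom ℚ) := minpoly.dvd ℚ α hαP
  have hm2 : minpoly ℚ α ∣ Q.map (Int.castRingHom ℚ) := minpoly.dvd ℚ α hαQ
  have hassoc : Associated (minpoly ℚ α) (P.map (Int.castRingHom ℚ)) :=
    (minpoly.irreducible hint).associated_of_dvd hirr hm1
  have hPdvdQ : P.map (Int.castRingHom ℚ) ∣ Q.map (Int.castRingHom ℚ) :=
    hassoc.symm.dvd.trans hm2
  -- pass to primitive parts
  have hcontP : P.content ≠ 0 := by simpa [content_eq_zero_iff] using hP0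
  have hcontQ : Q.content ≠ 0 := by simpa [content_eq_zero_iff] using hQ0
  have huP : IsUnit (Polynomial.C ((P.content : ℚ))) := by
    apply isUnit_C.mpr; exact isUnit_iff_ne_zero.mpr (by exact_mod_cast hcontP)
  have huQ : IsUnit (Polynomial.C ((Q.content : ℚ))) := by
    apply isUnit_C.mpr; exact isUnit_iff_ne_zero.mpr (by exact_mod_cast hcontQ)
  have hPmap : P.map (Int.castRingHom ℚ) =
      Polynomial.C ((P.content : ℚ)) * (P.primPart.map (Int.castRingHom ℚ)) := by
    conv_lhs => rw [P.eq_C_content_mul_primPart]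
    simp [Polynomial.map_mul]
  have hQmap : Q.map (Int.castRingHom ℚ) =
      Polynomial.C ((Q.content : ℚ)) * (Q.primPart.map (Int.castRingHom ℚ)) := by
    conv_lhs => rw [Q.eq_C_content_mul_primPart]
    simp [Polynomial.map_mul]
  have hpp : P.primPart.map (Int.castRingHom ℚ) ∣ Q.primPart.map (Int.castRingHom ℚ) := by
    have h1 : P.primPart.map (Int.castRingHom ℚ) ∣ P.map (Int.castRingHom ℚ) := by
      rw [hPmap]; exact dvd_mul_left _ _
    have h2 : Q.map (Int.castRingHom ℚ) ∣ Q.primPart.map (Int.castRingHom ℚ) := by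
      rw [hQmap]
      obtain ⟨u, hu⟩ := huQ
      exact ⟨(↑u⁻¹ : ℚ[X]), by rw [← hu, mul_comm (↑u : ℚ[X]), mul_assoc]; simp⟩
    exact (h1.trans hPdvdQ).trans h2
  have hdvdZ : P.primPart ∣ Q.primPart :=
    (IsPrimitive.Int.dvd_iff_map_cast_dvd_map_cast _ _ P.isPrimitive_primPart
      ).mpr hpp
  -- p divides primPart P eval a
  have hevalP : P.eval a = P.content * P.primPart.eval a := by
    conv_lhs => rw [P.eq_C_content_mul_primPart]
    simp
  have hpprime : Prime ((p : ℤ)) := Nat.prime_iff_prime_int.mp hp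
  have hnotcont : ¬ (p : ℤ) ∣ P.content := fun h =>
    hlead (h.trans (P.content_dvd_coeff P.natDegree))
  have hdvdpp : (p : ℤ) ∣ P.primPart.eval a := by
    rcases hpprime.dvd_or_dvd (hevalP ▸ ha) with h | h
    · exact absurd h hnotcont
    · exact h
  have : (p : ℤ) ∣ Q.primPart.eval a := hdvdpp.trans (Polynomial.eval_dvd hdvdZ)
  calc (p : ℤ) ∣ Q.primPart.eval a := this
    _ ∣ Q.eval a := by
        conv_rhs => rw [Q.eq_C_content_mul_primPart]
        simp [dvd_mul_left]
end

section
/- For any P ∈ ℤ[x] and any prime p, there exists P₋ ∈ ℤ[x] such that p ∉ S(P₋) and for every prime q ≠ p, q ∈ S(P₋) if and only if q ∈ S(P). -/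
open Polynomial

lemma coeff_comp_C_mul_X (P : Polynomial ℤ) (c : ℤ) (i : ℕ) :
    (P.comp (C c * X)).coeff i = P.coeff i * c ^ i := by
  rw [comp_eq_sum_left, Polynomial.sum, finset_sum_coeff]
  simp only [mul_pow, ← C_pow, ← mul_assoc, ← C_mul, coeff_C_mul, coeff_X_pow, mul_ite, mul_one, mul_zero]
  rw [Finset.sum_ite_eq P.support i (fun e => P.coeff e * c ^ e)]
  by_cases h : i ∈ P.support
  · simp [h]
  · simp [h, Polynomial.notMem_support_iff.mp h]

theorem remove_prime_divisor (P : Polynomial ℤ) (p : ℕ) (hp : p.Prime) :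
    ∃ Pminus : Polynomial ℤ,
      (¬ ∃ n : ℤ, (p : ℤ) ∣ Pminus.eval n) ∧
      ∀ q : ℕ, q.Prime → q ≠ p →
        ((∃ n : ℤ, (q : ℤ) ∣ Pminus.eval n) ↔ (∃ n : ℤ, (q : ℤ) ∣ P.eval n)) := by
  by_cases h0 : P.eval 0 = 0
  · refine ⟨C (p : ℤ) * X + 1, ?_, ?_⟩
    · rintro ⟨n, hn⟩
      simp only [eval_add, eval_mul, eval_C, eval_X, eval_one] at hn
      have h1 : (p : ℤ) ∣ 1 := (dvd_add_right (dvd_mul_right _ n)).mp hn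
      have h2 := Int.le_of_dvd one_pos h1
      have := hp.two_le
      omega
    · intro q hq hqp
      constructor
      · rintro ⟨n, -⟩
        exact ⟨0, by simp [h0]⟩
      · rintro ⟨m, -⟩
        have hcop : IsCoprime (q : ℤ) (p : ℤ) := by
          rw [Int.isCoprime_iff_gcd_eq_one]
          exact_mod_cast (Nat.coprime_primes hq hp).mpr hqp
        obtain ⟨u, v, huv⟩ := hcop
        refine ⟨-v, ⟨u, ?_⟩⟩
        simp only [eval_add, eval_mul, eval_C, eval_X, eval_one]
        linear_combination -huv
  · set k := ((P.eval 0).natAbs).factorization p with hk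
    have hnz : (P.eval 0).natAbs ≠ 0 := fun h => h0 (Int.natAbs_eq_zero.mp h)
    have hdvd : ((p : ℤ)) ^ k ∣ P.eval 0 := by
      have h1 := Nat.ordProj_dvd (P.eval 0).natAbs p
      rw [← hk] at h1
      have h2 := Int.natCast_dvd_natCast.mpr h1
      rw [Nat.cast_pow] at h2
      exact Int.dvd_natAbs.mp h2
    have hndvd : ¬ ((p : ℤ)) ^ (k + 1) ∣ P.eval 0 := by
      intro h
      have h2 : ((p ^ (k + 1) : ℕ) : ℤ) ∣ ((P.eval 0).natAbs : ℤ) := by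
        rw [Nat.cast_pow]; exact Int.dvd_natAbs.mpr h
      exact Nat.pow_succ_factorization_not_dvd hnz hp (Int.natCast_dvd_natCast.mp h2)
    set c : ℤ := (p : ℤ) ^ (k + 1) with hc
    set Q := P.comp (C c * X) with hQ
    have hQcoeff : C ((p : ℤ) ^ k) ∣ Q := by
      rw [C_dvd_iff_dvd_coeff]
      intro i
      rw [hQ, coeff_comp_C_mul_X]
      rcases Nat.eq_zero_or_pos i with hi | hi
      · subst hi
        simpa [coeff_zero_eq_eval_zero] using hdvd.mul_right 1
      · refine dvd_mul_of_dvd_right ?_ _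
        rw [hc, ← pow_mul]
        exact pow_dvd_pow _ (by nlinarith)
    obtain ⟨R, hR⟩ := hQcoeff
    have hevalQ : ∀ n : ℤ, P.eval (c * n) = (p : ℤ) ^ k * R.eval n := by
      intro n
      have h1 : Q.eval n = P.eval (c * n) := by simp [hQ, eval_comp]
      rw [← h1, hR]; simp
    refine ⟨R, ?_, ?_⟩
    · rintro ⟨n, hn⟩
      apply hndvd
      have h1 : (p : ℤ) ^ (k + 1) ∣ P.eval (c * n) := by
        rw [hevalQ n, pow_succ]
        exact mul_dvd_mul_left _ hn
      have h2 : (p : ℤ) ^ (k + 1) ∣ P.eval (c * n) - P.eval 0 := by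
        refine dvd_trans ?_ (sub_dvd_eval_sub (c * n) 0 P)
        rw [sub_zero, ← hc]
        exact Dvd.intro n rfl
      simpa using dvd_sub h1 h2
    · intro q hq hqp
      have hcop : IsCoprime (q : ℤ) (p : ℤ) := by
        rw [Int.isCoprime_iff_gcd_eq_one]
        exact_mod_cast (Nat.coprime_primes hq hp).mpr hqp
      constructor
      · rintro ⟨n, hn⟩
        exact ⟨c * n, by rw [hevalQ n]; exact hn.mul_left _⟩
      · rintro ⟨m, hm⟩
        have hcopc : IsCoprime (q : ℤ) c := hcop.pow_right
        obtain ⟨u, v, huv⟩ := hcopc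
        have hdiff : (q : ℤ) ∣ P.eval (c * (v * m)) - P.eval m := by
          refine dvd_trans ⟨-(u * m), by linear_combination m * huv⟩
            (sub_dvd_eval_sub (c * (v * m)) m P)
        have hq1 := dvd_add hdiff hm
        rw [sub_add_cancel] at hq1
        rw [hevalQ (v * m)] at hq1
        exact ⟨v * m, (hcop.pow_right).dvd_of_dvd_mul_left hq1⟩
end

section
/- If P(0) ≠ 0 and p^k is the exact power of a prime p dividing P(0), then the polynomial Q(x) = P(p^(k+1)·x)/p^k has integer coefficients, all of its coefficients except the constant term are divisible by p, and hence p ∉ S(Q). -/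
open Polynomial

theorem scaled_poly_avoids_p (P : Polynomial ℤ) (p : ℕ) (hp : p.Prime) (k : ℕ)
    (h0 : P.eval 0 ≠ 0)
    (hk : (p : ℤ) ^ k ∣ P.eval 0) (hk1 : ¬ (p : ℤ) ^ (k + 1) ∣ P.eval 0) :
    ∃ Q : Polynomial ℤ,
      (∀ x : ℤ, (p : ℤ) ^ k * Q.eval x = P.eval ((p : ℤ) ^ (k + 1) * x)) ∧
      (∀ i : ℕ, i ≠ 0 → (p : ℤ) ∣ Q.coeff i) ∧
      ¬ ∃ n : ℤ, (p : ℤ) ∣ Q.eval n := by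
  have hpne : (p : ℤ) ^ k ≠ 0 := pow_ne_zero _ (by exact_mod_cast hp.ne_zero)
  set c : ℤ := (p : ℤ) ^ (k + 1) with hc
  set R : Polynomial ℤ := P.comp (C c * X) with hR
  have hRcoeff : ∀ i, R.coeff i = P.coeff i * c ^ i := coeff_comp_C_mul_X P c
  have hdvdR : (C ((p : ℤ) ^ k) : Polynomial ℤ) ∣ R := by
    rw [C_dvd_iff_dvd_coeff]
    intro i
    rw [hRcoeff]
    rcases Nat.eq_zero_or_pos i with h | h
    · subst h
      simpa [coeff_zero_eq_eval_zero] using hk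
    · exact Dvd.dvd.mul_left
        ((pow_dvd_pow (p : ℤ) (Nat.le_succ k)).trans (dvd_pow_self c (by omega))) _
  obtain ⟨Q, hQ⟩ := hdvdR
  have hcoeffQ : ∀ i, (p : ℤ) ^ k * Q.coeff i = P.coeff i * c ^ i := by
    intro i
    rw [← hRcoeff, hQ, coeff_C_mul]
  have hQdvd : ∀ i : ℕ, i ≠ 0 → (p : ℤ) ∣ Q.coeff i := by
    intro i hi
    have h1 : (p : ℤ) ^ k * ((p : ℤ) * ((p : ℤ) ^ ((k + 1) * (i - 1)) * P.coeff i)) =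
        (p : ℤ) ^ k * Q.coeff i := by
      rw [hcoeffQ, hc, ← pow_mul]
      have h2 : (k + 1) * i = k + (1 + (k + 1) * (i - 1)) := by
        cases i with
        | zero => omega
        | succ j => rw [Nat.mul_succ, Nat.add_sub_cancel]; omega
      rw [h2, pow_add, pow_add]
      ring
    exact ⟨_, (mul_left_cancel₀ hpne h1).symm⟩
  have hc0 : ¬ (p : ℤ) ∣ Q.coeff 0 := by
    intro hd
    apply hk1
    have h1 : (p : ℤ) ^ k * Q.coeff 0 = P.eval 0 := by
      have := hcoeffQ 0
      simpa [coeff_zero_eq_eval_zero] using this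
    obtain ⟨m, hm⟩ := hd
    refine ⟨m, ?_⟩
    rw [← h1, hm]
    simp only [hc, pow_succ]
    ring
  refine ⟨Q, ?_, hQdvd, ?_⟩
  · intro x
    have := congrArg (Polynomial.eval x) hQ
    simpa [hR, eval_comp, mul_comm] using this.symm
  · rintro ⟨n, hn⟩
    set f : ℤ →+* ZMod p := Int.castRingHom (ZMod p) with hf
    have hmap : Q.map f = C (f (Q.coeff 0)) := by
      ext i
      cases i with
      | zero => simp [coeff_map]
      | succ j =>
          rw [coeff_map, coeff_C]
          simp only [Nat.succ_ne_zero, if_false]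
          exact (ZMod.intCast_zmod_eq_zero_iff_dvd _ p).mpr (hQdvd (j + 1) (Nat.succ_ne_zero j))
    have h4 : f (Q.eval n) = f (Q.coeff 0) := by
      rw [← Polynomial.eval₂_hom, ← eval_map, hmap, eval_C]
    have h5 : f (Q.eval n) = 0 := (ZMod.intCast_zmod_eq_zero_iff_dvd _ p).mpr hn
    have h6 : f (Q.coeff 0) = 0 := h4.symm.trans h5
    exact hc0 ((ZMod.intCast_zmod_eq_zero_iff_dvd _ p).mp h6)
end
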